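/- Let k → A and k → B be homomorphisms of commutative rings, and let α : A ⊗_k A → (A ⊗_k B) ⊗_k (A ⊗_k B) and β : B ⊗_k B → (A ⊗_k B) ⊗_k (A ⊗_k B) be the canonical ring maps given by a ⊗ a' ↦ (a ⊗ 1) ⊗ (a' ⊗ 1) and b ⊗ b' ↦ (1 ⊗ b) ⊗ (1 ⊗ b'). Then: (i) the diagonal ideal I_{(A⊗_kB)/k} is generated by α(I_{A/k}) ∪ β(I_{B/k}); and (ii) for every natural number N, writing J_N for the ideal of (A ⊗_k B) ⊗_k (A ⊗_k B) generated by α(I_{A/k}^{N+1}) ∪ β(I_{B/k}^{N+1}), one has the inclusions I_{(A⊗_kB)/k}^{2N+1} ⊆ J_N ⊆ I_{(A⊗_kB)/k}^{N+1}. -/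

import Mathlib

/-!
Basic infrastructure for jet algebras and jet modules, following the paper
"Basics of jet modules and algebraic linear differential operators".

For a ring homomorphism `k → A`, the diagonal ideal `I_{A/k} ⊆ A ⊗[k] A` is the kernel of
the multiplication map; the `N`-th jet algebra is `J^N(A/k) = (A ⊗[k] A) ⧸ I_{A/k}^{N+1}`,
with its two `A`-algebra structure maps `p₁ : a ↦ a ⊗ 1` and `p₂ : a ↦ 1 ⊗ a`.
For an `A`-module `M`, `A ⊗[k] M` is a module over `A ⊗[k] A` via
`(a ⊗ b) • (x ⊗ m) = (a * x) ⊗ (b • m)`, and the `N`-th jet module is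
`J^N(M/k) = (A ⊗[k] M) ⧸ I_{A/k}^{N+1} · (A ⊗[k] M)`, a module over `J^N(A/k)`,
equipped with the universal filtered derivation `d^N : M → J^N(M/k)`, `m ↦ [1 ⊗ m]`.
-/

open scoped TensorProduct

namespace JetPaper

section Bimodule

variable (R B C M P : Type*) [CommRing R]
  [CommRing B] [Algebra R B] [CommRing C] [Algebra R C]
  [AddCommGroup M] [Module R M] [Module B M] [IsScalarTower R B M]
  [AddCommGroup P] [Module R P] [Module C P] [IsScalarTower R C P]

/-- The action of `C` on `M ⊗[R] P` through the right-hand factor, as an algebra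
homomorphism into endomorphisms. -/
noncomputable def rightSMulEnd : C →ₐ[R] Module.End R (M ⊗[R] P) where
  toFun c := LinearMap.lTensor M (Algebra.lsmul R R P c)
  map_one' := LinearMap.ext fun x => by
    induction x using TensorProduct.induction_on with
    | zero => simp
    | tmul m p => simp
    | add u v hu hv => simp only [map_add, hu, hv]
  map_mul' c c' := LinearMap.ext fun x => by
    induction x using TensorProduct.induction_on with
    | zero => simp
    | tmul m p => simp [mul_smul, Module.End.mul_apply]
    | add u v hu hv => simp only [map_add, Module.End.mul_apply] at hu hv ⊢; rw [hu, hv]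
  map_zero' := LinearMap.ext fun x => by
    induction x using TensorProduct.induction_on with
    | zero => simp
    | tmul m p => simp
    | add u v hu hv => simp only [map_add, hu, hv]
  map_add' c c' := LinearMap.ext fun x => by
    induction x using TensorProduct.induction_on with
    | zero => simp
    | tmul m p => simp [add_smul, TensorProduct.tmul_add]
    | add u v hu hv =>
        simp only [map_add, LinearMap.add_apply] at hu hv ⊢
        rw [hu, hv]
  commutes' r := LinearMap.ext fun x => by
    induction x using TensorProduct.induction_on with
    | zero => simp
    | tmul m p =>
        simp only [LinearMap.lTensor_tmul, Algebra.lsmul_coe,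
          Module.algebraMap_end_apply, algebraMap_smul]
        rw [TensorProduct.tmul_smul]
    | add u v hu hv => simp only [map_add, hu, hv]

@[simp] lemma rightSMulEnd_tmul (c : C) (m : M) (p : P) :
    rightSMulEnd R C M P c (m ⊗ₜ[R] p) = m ⊗ₜ[R] (c • p) := by
  simp [rightSMulEnd]

/-- The algebra homomorphism `B ⊗[R] C → End (M ⊗[R] P)` realizing the natural
bimodule structure `(b ⊗ c) • (m ⊗ p) = (b • m) ⊗ (c • p)`. -/
noncomputable def bimodMap : (B ⊗[R] C) →ₐ[R] Module.End R (M ⊗[R] P) :=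
  Algebra.TensorProduct.lift (Algebra.lsmul R R (M ⊗[R] P)) (rightSMulEnd R C M P)
    (fun b c => LinearMap.ext fun x => by
      induction x using TensorProduct.induction_on with
      | zero => simp [Module.End.mul_apply]
      | tmul m p => simp [Module.End.mul_apply, TensorProduct.smul_tmul']
      | add u v hu hv =>
          simp only [Module.End.mul_apply] at hu hv ⊢
          simp only [map_add, hu, hv])

/-- The `B ⊗[R] C`-module structure on `M ⊗[R] P`, where `B` acts through the left factor
and `C` through the right one. -/
noncomputable def bimodule : Module (B ⊗[R] C) (M ⊗[R] P) :=
  Module.compHom _ (bimodMap R B C M P).toRingHom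

/-- The action of `C` on `M ⊗[R] P` through the right-hand factor, as a module structure. -/
noncomputable def rightTensorModule : Module C (M ⊗[R] P) :=
  Module.compHom _ (rightSMulEnd R C M P).toRingHom

end Bimodule

section BiTensorDef

/-- Type synonym for `M ⊗[R] P`, regarded as a module over `B ⊗[R] C`, where `B` acts
through the left factor and `C` through the right factor. -/
@[nolint unusedArguments]
def BiTensor (R B C M P : Type*) [CommRing R]
    [CommRing B] [Algebra R B] [CommRing C] [Algebra R C]
    [AddCommGroup M] [Module R M] [Module B M] [IsScalarTower R B M]
    [AddCommGroup P] [Module R P] [Module C P] [IsScalarTower R C P] : Type _ :=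
  M ⊗[R] P

variable (R B C M P : Type*) [CommRing R]
  [CommRing B] [Algebra R B] [CommRing C] [Algebra R C]
  [AddCommGroup M] [Module R M] [Module B M] [IsScalarTower R B M]
  [AddCommGroup P] [Module R P] [Module C P] [IsScalarTower R C P]

/-- The canonical (identity) map `M ⊗[R] P → BiTensor R B C M P`. -/
def BiTensor.of : M ⊗[R] P → BiTensor R B C M P := id

noncomputable instance : AddCommGroup (BiTensor R B C M P) :=
  inferInstanceAs (AddCommGroup (M ⊗[R] P))

noncomputable instance : Module R (BiTensor R B C M P) :=
  inferInstanceAs (Module R (M ⊗[R] P))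

noncomputable instance : Module (B ⊗[R] C) (BiTensor R B C M P) := bimodule R B C M P

noncomputable instance : Module C (BiTensor R B C M P) := rightTensorModule R C M P

lemma BiTensor.smul_of (b : B) (c : C) (m : M) (p : P) :
    (b ⊗ₜ[R] c : B ⊗[R] C) • BiTensor.of R B C M P (m ⊗ₜ[R] p) =
      BiTensor.of R B C M P ((b • m) ⊗ₜ[R] (c • p)) := by
  show bimodMap R B C M P (b ⊗ₜ[R] c) (m ⊗ₜ[R] p) = _
  rw [show bimodMap R B C M P (b ⊗ₜ[R] c) = Algebra.lsmul R R (M ⊗[R] P) b * rightSMulEnd R C M P c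
    from Algebra.TensorProduct.lift_tmul ..]
  simp only [Module.End.mul_apply, TensorProduct.smul_tmul', rightSMulEnd_tmul,
    Algebra.lsmul_coe]
  rfl

lemma BiTensor.rsmul_of (c : C) (m : M) (p : P) :
    c • BiTensor.of R B C M P (m ⊗ₜ[R] p) = BiTensor.of R B C M P (m ⊗ₜ[R] (c • p)) := by
  show rightSMulEnd R C M P c (m ⊗ₜ[R] p) = _
  simp only [rightSMulEnd_tmul]
  rfl

attribute [local instance] Algebra.TensorProduct.rightAlgebra in
instance : IsScalarTower C (B ⊗[R] C) (BiTensor R B C M P) := by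
  refine IsScalarTower.of_algebraMap_smul
    (R := C) (A := B ⊗[R] C) (M := BiTensor R B C M P) fun c x => ?_
  have halg : algebraMap C (B ⊗[R] C) c = (1 : B) ⊗ₜ[R] c := rfl
  have key : ∀ y : M ⊗[R] P,
      ((1 : B) ⊗ₜ[R] c : B ⊗[R] C) • BiTensor.of R B C M P y =
        c • BiTensor.of R B C M P y := by
    intro y
    induction y using TensorProduct.induction_on with
    | zero =>
        show ((1 : B) ⊗ₜ[R] c : B ⊗[R] C) • (0 : BiTensor R B C M P) =
          c • (0 : BiTensor R B C M P)
        rw [smul_zero, smul_zero]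
    | tmul m p => rw [BiTensor.smul_of, one_smul, BiTensor.rsmul_of]
    | add u v hu hv =>
        have hadd : ∀ u v : M ⊗[R] P, BiTensor.of R B C M P (u + v) =
            BiTensor.of R B C M P u + BiTensor.of R B C M P v := fun _ _ => rfl
        rw [hadd, smul_add, smul_add, hu, hv]
  rw [halg]
  exact key x

end BiTensorDef

section JetDef

variable (k A : Type*) [CommRing k] [CommRing A] [Algebra k A]

/-- The diagonal ideal `I_{A/k} ⊆ A ⊗[k] A`: the kernel of the multiplication map. -/
noncomputable abbrev diagIdeal : Ideal (A ⊗[k] A) := KaehlerDifferential.ideal k A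

/-- The `N`-th jet algebra `J^N(A/k) = (A ⊗[k] A) ⧸ I_{A/k}^{N+1}`. -/
noncomputable abbrev JetAlg (N : ℕ) : Type _ :=
  (A ⊗[k] A) ⧸ (diagIdeal k A ^ (N + 1))

/-- The first `A`-algebra structure map `p₁ : A → J^N(A/k)`, `a ↦ a ⊗ 1`. -/
noncomputable def jetP1 (N : ℕ) : A →+* JetAlg k A N :=
  (Ideal.Quotient.mk _).comp Algebra.TensorProduct.includeLeftRingHom

/-- The second `A`-algebra structure map `p₂ : A → J^N(A/k)`, `a ↦ 1 ⊗ a`. -/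
noncomputable def jetP2 (N : ℕ) : A →+* JetAlg k A N :=
  (Ideal.Quotient.mk _).comp (Algebra.TensorProduct.includeRight : A →ₐ[k] A ⊗[k] A).toRingHom

variable (M : Type*) [AddCommGroup M] [Module k M] [Module A M] [IsScalarTower k A M]

/-- `A ⊗[k] M` is a module over `A ⊗[k] A` via `(a ⊗ b) • (x ⊗ m) = (a * x) ⊗ (b • m)`. -/
noncomputable instance jetTensorModule : Module (A ⊗[k] A) (A ⊗[k] M) :=
  bimodule k A A A M

@[simp] lemma jet_smul_tmul (a b x : A) (m : M) :
    (a ⊗ₜ[k] b : A ⊗[k] A) • (x ⊗ₜ[k] m : A ⊗[k] M) = (a * x) ⊗ₜ[k] (b • m) := by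
  show bimodMap k A A A M (a ⊗ₜ[k] b) (x ⊗ₜ[k] m) = _
  rw [show bimodMap k A A A M (a ⊗ₜ[k] b) = Algebra.lsmul k k (A ⊗[k] M) a * rightSMulEnd k A A M b
    from Algebra.TensorProduct.lift_tmul ..]
  simp [Module.End.mul_apply, TensorProduct.smul_tmul', smul_eq_mul]

instance jetTower1 : IsScalarTower A (A ⊗[k] A) (A ⊗[k] M) :=
  IsScalarTower.of_algebraMap_smul fun a x => by
    have halg : algebraMap A (A ⊗[k] A) a = a ⊗ₜ[k] (1 : A) := rfl
    rw [halg]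
    induction x using TensorProduct.induction_on with
    | zero => simp
    | tmul y m => rw [jet_smul_tmul, TensorProduct.smul_tmul']; simp
    | add u v hu hv => rw [smul_add, hu, hv, smul_add]

instance jetTower0 : IsScalarTower k (A ⊗[k] A) (A ⊗[k] M) :=
  IsScalarTower.of_algebraMap_smul fun r x => by
    rw [IsScalarTower.algebraMap_apply k A (A ⊗[k] A), algebraMap_smul, algebraMap_smul]

/-- The `N`-th jet module `J^N(M/k) = (A ⊗[k] M) ⧸ I_{A/k}^{N+1}·(A ⊗[k] M)`;
it is a module over `J^N(A/k)`. -/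
noncomputable abbrev JetMod (N : ℕ) : Type _ :=
  (A ⊗[k] M) ⧸ ((diagIdeal k A ^ (N + 1)) • (⊤ : Submodule (A ⊗[k] A) (A ⊗[k] M)))

/-- The universal (filtered) derivation `d^N_{M/k} : M → J^N(M/k)`, `m ↦ [1 ⊗ m]`. -/
noncomputable def jetD (N : ℕ) : M → JetMod k A M N :=
  fun m => Submodule.Quotient.mk ((1 : A) ⊗ₜ[k] m)

instance jetModTower (N : ℕ) : IsScalarTower k A (JetMod k A M N) :=
  IsScalarTower.of_algebraMap_smul fun r x => by
    obtain ⟨y, rfl⟩ := Submodule.Quotient.mk_surjective _ x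
    rw [← Submodule.Quotient.mk_smul, ← Submodule.Quotient.mk_smul, algebraMap_smul]

instance jetQuotTower (N : ℕ) : IsScalarTower A (JetAlg k A N) (JetMod k A M N) := by
  refine IsScalarTower.of_algebraMap_smul
    (R := A) (A := JetAlg k A N) (M := JetMod k A M N) fun a x => ?_
  obtain ⟨y, rfl⟩ := Submodule.Quotient.mk_surjective _ x
  have h1 : algebraMap A (JetAlg k A N) a • (Submodule.Quotient.mk y : JetMod k A M N) =
      Submodule.Quotient.mk ((algebraMap A (A ⊗[k] A) a) • y) := rfl
  rw [h1, algebraMap_smul (A ⊗[k] A) a y, Submodule.Quotient.mk_smul]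

end JetDef

end JetPaper


namespace JetPaper

section ExteriorProducts

variable (k A B : Type*) [CommRing k] [CommRing A] [CommRing B] [Algebra k A] [Algebra k B]

/-- The canonical map `α : A ⊗[k] A → (A ⊗[k] B) ⊗[k] (A ⊗[k] B)`,
`a ⊗ a' ↦ (a ⊗ 1) ⊗ (a' ⊗ 1)`. -/
noncomputable def alphaMap : (A ⊗[k] A) →ₐ[k] ((A ⊗[k] B) ⊗[k] (A ⊗[k] B)) :=
  Algebra.TensorProduct.map Algebra.TensorProduct.includeLeft Algebra.TensorProduct.includeLeft

/-- The canonical map `β : B ⊗[k] B → (A ⊗[k] B) ⊗[k] (A ⊗[k] B)`,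
`b ⊗ b' ↦ (1 ⊗ b) ⊗ (1 ⊗ b')`. -/
noncomputable def betaMap : (B ⊗[k] B) →ₐ[k] ((A ⊗[k] B) ⊗[k] (A ⊗[k] B)) :=
  Algebra.TensorProduct.map Algebra.TensorProduct.includeRight Algebra.TensorProduct.includeRight

/-- Pigeonhole bound for powers of a sup of ideals. -/
lemma sup_pow_add_one_le {R : Type*} [CommRing R] {I J : Ideal R} (n m : ℕ) :
    (I ⊔ J) ^ (n + m + 1) ≤ I ^ (n + 1) ⊔ J ^ (m + 1) := by
  rw [← Ideal.add_eq_sup, ← Ideal.add_eq_sup, add_pow, Ideal.sum_eq_sup]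
  apply Finset.sup_le
  intro i _
  by_cases hn : n + 1 ≤ i
  · exact Ideal.mul_le_left.trans (Ideal.mul_le_left.trans
      ((Ideal.pow_le_pow_right hn).trans le_sup_left))
  · refine Ideal.mul_le_left.trans (Ideal.mul_le_right.trans
      ((Ideal.pow_le_pow_right ?_).trans le_sup_right))
    omega

lemma lmul'_comp_alphaMap :
    (Algebra.TensorProduct.lmul' k (S := (A ⊗[k] B))).comp (alphaMap k A B) =
      (Algebra.TensorProduct.includeLeft : A →ₐ[k] A ⊗[k] B).comp
        (Algebra.TensorProduct.lmul' k (S := A)) := by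
  apply Algebra.TensorProduct.ext'
  intro a a'
  simp [alphaMap, Algebra.TensorProduct.lmul'_apply_tmul,
    Algebra.TensorProduct.tmul_mul_tmul]

lemma lmul'_comp_betaMap :
    (Algebra.TensorProduct.lmul' k (S := (A ⊗[k] B))).comp (betaMap k A B) =
      (Algebra.TensorProduct.includeRight : B →ₐ[k] A ⊗[k] B).comp
        (Algebra.TensorProduct.lmul' k (S := B)) := by
  apply Algebra.TensorProduct.ext'
  intro b b'
  simp [betaMap, Algebra.TensorProduct.lmul'_apply_tmul,
    Algebra.TensorProduct.tmul_mul_tmul]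

lemma alphaMap_mem_diagIdeal {x : A ⊗[k] A} (hx : x ∈ diagIdeal k A) :
    alphaMap k A B x ∈ diagIdeal k (A ⊗[k] B) := by
  rw [RingHom.mem_ker] at hx ⊢
  have := congrFun (congrArg (DFunLike.coe) (lmul'_comp_alphaMap k A B)) x
  simp only [AlgHom.coe_comp, Function.comp_apply] at this
  rw [this, hx, map_zero]

lemma betaMap_mem_diagIdeal {x : B ⊗[k] B} (hx : x ∈ diagIdeal k B) :
    betaMap k A B x ∈ diagIdeal k (A ⊗[k] B) := by
  rw [RingHom.mem_ker] at hx ⊢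
  have := congrFun (congrArg (DFunLike.coe) (lmul'_comp_betaMap k A B)) x
  simp only [AlgHom.coe_comp, Function.comp_apply] at this
  rw [this, hx, map_zero]

lemma diagIdeal_tensorProduct_eq :
    diagIdeal k (A ⊗[k] B) =
      Ideal.map (alphaMap k A B) (diagIdeal k A) ⊔
        Ideal.map (betaMap k A B) (diagIdeal k B) := by
  apply le_antisymm
  · show KaehlerDifferential.ideal k (A ⊗[k] B) ≤ _
    rw [← KaehlerDifferential.span_range_eq_ideal, Ideal.span_le]
    rintro _ ⟨x, rfl⟩
    set S := Ideal.map (alphaMap k A B) (diagIdeal k A) ⊔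
      Ideal.map (betaMap k A B) (diagIdeal k B) with hS
    show (1 : A ⊗[k] B) ⊗ₜ[k] x - x ⊗ₜ[k] (1 : A ⊗[k] B) ∈ S
    induction x using TensorProduct.induction_on with
    | zero => simp
    | tmul a b =>
        have hA : alphaMap k A B ((1 : A) ⊗ₜ[k] a - a ⊗ₜ[k] (1 : A)) ∈ S :=
          Ideal.mem_sup_left <| Ideal.mem_map_of_mem _
            (KaehlerDifferential.one_smul_sub_smul_one_mem_ideal k a)
        have hB : betaMap k A B ((1 : B) ⊗ₜ[k] b - b ⊗ₜ[k] (1 : B)) ∈ S :=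
          Ideal.mem_sup_right <| Ideal.mem_map_of_mem _
            (KaehlerDifferential.one_smul_sub_smul_one_mem_ideal k b)
        have key : (1 : A ⊗[k] B) ⊗ₜ[k] (a ⊗ₜ[k] b) - (a ⊗ₜ[k] b) ⊗ₜ[k] (1 : A ⊗[k] B) =
            alphaMap k A B ((1 : A) ⊗ₜ[k] a - a ⊗ₜ[k] (1 : A)) *
              ((1 : A ⊗[k] B) ⊗ₜ[k] ((1 : A) ⊗ₜ[k] b)) +
            ((a ⊗ₜ[k] (1 : B)) ⊗ₜ[k] (1 : A ⊗[k] B)) *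
              betaMap k A B ((1 : B) ⊗ₜ[k] b - b ⊗ₜ[k] (1 : B)) := by
          simp only [alphaMap, betaMap, map_sub, Algebra.TensorProduct.map_tmul,
            Algebra.TensorProduct.includeLeft_apply, Algebra.TensorProduct.includeRight_apply,
            sub_mul, mul_sub, Algebra.TensorProduct.tmul_mul_tmul, one_mul, mul_one]
          abel
        rw [key]
        exact S.add_mem (S.mul_mem_right _ hA) (S.mul_mem_left _ hB)
    | add u v hu hv =>
        have : (1 : A ⊗[k] B) ⊗ₜ[k] (u + v) - (u + v) ⊗ₜ[k] (1 : A ⊗[k] B) =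
            ((1 : A ⊗[k] B) ⊗ₜ[k] u - u ⊗ₜ[k] (1 : A ⊗[k] B)) +
            ((1 : A ⊗[k] B) ⊗ₜ[k] v - v ⊗ₜ[k] (1 : A ⊗[k] B)) := by
          rw [TensorProduct.tmul_add, TensorProduct.add_tmul]; abel
        rw [this]
        exact S.add_mem hu hv
  · refine sup_le (Ideal.map_le_iff_le_comap.2 fun x hx => ?_)
      (Ideal.map_le_iff_le_comap.2 fun x hx => ?_)
    · exact alphaMap_mem_diagIdeal k A B hx
    · exact betaMap_mem_diagIdeal k A B hx

/-- (i) The diagonal ideal of `A ⊗[k] B` is generated by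
`α(I_{A/k}) ∪ β(I_{B/k})`; (ii) for every `N`, writing `J_N` for the ideal generated by
`α(I_{A/k}^{N+1}) ∪ β(I_{B/k}^{N+1})`, one has
`I_{(A⊗B)/k}^{2N+1} ⊆ J_N ⊆ I_{(A⊗B)/k}^{N+1}`. -/
theorem diagIdeal_tensorProduct :
    diagIdeal k (A ⊗[k] B) =
      Ideal.span (⇑(alphaMap k A B) '' (diagIdeal k A : Set (A ⊗[k] A)) ∪
        ⇑(betaMap k A B) '' (diagIdeal k B : Set (B ⊗[k] B))) ∧
    ∀ N : ℕ,
      diagIdeal k (A ⊗[k] B) ^ (2 * N + 1) ≤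
        Ideal.span
          (⇑(alphaMap k A B) '' ((diagIdeal k A ^ (N + 1) : Ideal (A ⊗[k] A)) : Set (A ⊗[k] A)) ∪
            ⇑(betaMap k A B) '' ((diagIdeal k B ^ (N + 1) : Ideal (B ⊗[k] B)) : Set (B ⊗[k] B))) ∧
      Ideal.span
          (⇑(alphaMap k A B) '' ((diagIdeal k A ^ (N + 1) : Ideal (A ⊗[k] A)) : Set (A ⊗[k] A)) ∪
            ⇑(betaMap k A B) '' ((diagIdeal k B ^ (N + 1) : Ideal (B ⊗[k] B)) : Set (B ⊗[k] B))) ≤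
        diagIdeal k (A ⊗[k] B) ^ (N + 1) := by
  have hspan : ∀ IA : Ideal (A ⊗[k] A), ∀ IB : Ideal (B ⊗[k] B),
      Ideal.span (⇑(alphaMap k A B) '' (IA : Set (A ⊗[k] A)) ∪
        ⇑(betaMap k A B) '' (IB : Set (B ⊗[k] B))) =
      Ideal.map (alphaMap k A B) IA ⊔ Ideal.map (betaMap k A B) IB := by
    intro IA IB
    rw [Ideal.span_union]
    rfl
  have hα : Ideal.map (alphaMap k A B) (diagIdeal k A) ≤ diagIdeal k (A ⊗[k] B) :=
    Ideal.map_le_iff_le_comap.2 fun x hx => alphaMap_mem_diagIdeal k A B hx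
  have hβ : Ideal.map (betaMap k A B) (diagIdeal k B) ≤ diagIdeal k (A ⊗[k] B) :=
    Ideal.map_le_iff_le_comap.2 fun x hx => betaMap_mem_diagIdeal k A B hx
  refine ⟨by rw [hspan]; exact diagIdeal_tensorProduct_eq k A B, fun N => ?_⟩
  rw [hspan, Ideal.map_pow, Ideal.map_pow]
  constructor
  · rw [diagIdeal_tensorProduct_eq k A B]
    have : 2 * N + 1 = N + N + 1 := by ring
    rw [this]
    exact sup_pow_add_one_le N N
  · exact sup_le ((Ideal.pow_right_mono hα (N + 1)))
      ((Ideal.pow_right_mono hβ (N + 1)))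

end ExteriorProducts

end JetPaper
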